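/- Let 0 < r₁ < r₂, let ϖ : [r₁, r₂] → ℝ be continuous and let γ ∈ ℝ. Set C = ( γ + ∫_{r₁}^{r₂} (1/s) ( ∫_{r₁}^{s} t·ϖ(t) dt ) ds ) / log(r₂/r₁), and define φ(r) = C·log(r/r₁) − ∫_{r₁}^{r} (1/s) ( ∫_{r₁}^{s} t·ϖ(t) dt ) ds for r ∈ [r₁, r₂]. Then φ(r₁) = 0, φ(r₂) = γ, φ is twice differentiable on (r₁, r₂), and for every r ∈ (r₁, r₂) one has −( φ''(r) + φ'(r)/r ) = ϖ(r). -/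

import Mathlib

open MeasureTheory intervalIntegral Set

theorem stmt_6 (r₁ r₂ : ℝ) (hr₁ : 0 < r₁) (hr : r₁ < r₂)
    (ϖ : ℝ → ℝ) (hϖ : ContinuousOn ϖ (Set.Icc r₁ r₂)) (γ : ℝ)
    (C : ℝ)
    (hC : C = (γ + ∫ s in r₁..r₂, (1 / s) * ∫ t in r₁..s, t * ϖ t) / Real.log (r₂ / r₁))
    (φ : ℝ → ℝ)
    (hφ : ∀ r : ℝ, φ r =
      C * Real.log (r / r₁) - ∫ s in r₁..r, (1 / s) * ∫ t in r₁..s, t * ϖ t) :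
    φ r₁ = 0 ∧ φ r₂ = γ ∧
    ∀ r ∈ Set.Ioo r₁ r₂,
      DifferentiableAt ℝ φ r ∧ DifferentiableAt ℝ (deriv φ) r ∧
      -(deriv (deriv φ) r + deriv φ r / r) = ϖ r := by
  have hlog : Real.log (r₂ / r₁) ≠ 0 :=
    ne_of_gt (Real.log_pos ((one_lt_div hr₁).2 hr))
  set g : ℝ → ℝ := fun s => ∫ t in r₁..s, t * ϖ t with hg
  set h : ℝ → ℝ := fun s => (1 / s) * g s with hh
  have hfc : ContinuousOn (fun t => t * ϖ t) (Set.Icc r₁ r₂) :=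
    continuousOn_id.mul hϖ
  have hfint : IntervalIntegrable (fun t => t * ϖ t) volume r₁ r₂ :=
    hfc.intervalIntegrable_of_Icc hr.le
  have hgc : ContinuousOn g (Set.Icc r₁ r₂) := by
    have := continuousOn_primitive_interval' hfint (left_mem_uIcc)
    rwa [uIcc_of_le hr.le] at this
  have hhc : ContinuousOn h (Set.Icc r₁ r₂) := by
    apply ContinuousOn.mul _ hgc
    apply ContinuousOn.div continuousOn_const continuousOn_id
    intro x hx
    exact ne_of_gt (lt_of_lt_of_le hr₁ hx.1)
  have hφ1 : φ r₁ = 0 := by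
    simp [hφ r₁, div_self (ne_of_gt hr₁)]
  have hφ2 : φ r₂ = γ := by
    rw [hφ r₂, hC]
    field_simp
    ring
  refine ⟨hφ1, hφ2, fun r hrm => ?_⟩
  have hr0 : (0:ℝ) < r := lt_trans hr₁ hrm.1
  -- derivative of g at points of Ioo
  have hgd : ∀ x ∈ Set.Ioo r₁ r₂, HasDerivAt g (x * ϖ x) x := by
    intro x hx
    apply intervalIntegral.integral_hasDerivAt_right
    · apply hfint.mono_set
      rw [uIcc_of_le hx.1.le, uIcc_of_le hr.le]
      exact Set.Icc_subset_Icc le_rfl hx.2.le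
    · exact (hfc.mono Set.Ioo_subset_Icc_self).stronglyMeasurableAtFilter isOpen_Ioo x hx
    · exact (hfc.mono Set.Ioo_subset_Icc_self).continuousAt (isOpen_Ioo.mem_nhds hx)
  -- derivative of φ
  have hψ : ∀ x ∈ Set.Ioo r₁ r₂, HasDerivAt φ ((C - g x) / x) x := by
    intro x hx
    have hx0 : (0:ℝ) < x := lt_trans hr₁ hx.1
    have hd1 : HasDerivAt (fun y => C * Real.log (y / r₁)) (C / x) x := by
      have : HasDerivAt (fun y => Real.log (y / r₁)) ((x / r₁)⁻¹ * (1 / r₁)) x := by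
        exact (Real.hasDerivAt_log (by positivity)).comp x
          ((hasDerivAt_id x).div_const r₁)
      have := this.const_mul C
      convert this using 1
      · rfl
      · rfl
      field_simp
    have hd2 : HasDerivAt (fun y => ∫ s in r₁..y, h s) (h x) x := by
      apply intervalIntegral.integral_hasDerivAt_right
      · exact (hhc.mono (Set.Icc_subset_Icc le_rfl hx.2.le)).intervalIntegrable_of_Icc hx.1.le
      · exact (hhc.mono Set.Ioo_subset_Icc_self).stronglyMeasurableAtFilter isOpen_Ioo x hx
      · exact (hhc.mono Set.Ioo_subset_Icc_self).continuousAt (isOpen_Ioo.mem_nhds hx)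
    have : HasDerivAt φ (C / x - h x) x := by
      have := hd1.sub hd2
      apply HasDerivAt.congr_of_eventuallyEq this
      filter_upwards with y using (hφ y)
    convert this using 1
    simp only [hh]
    field_simp
  have hderiv : Set.EqOn (deriv φ) (fun x => (C - g x) / x) (Set.Ioo r₁ r₂) :=
    fun x hx => (hψ x hx).deriv
  have hdφ : DifferentiableAt ℝ φ r := (hψ r hrm).differentiableAt
  -- second derivative
  have hψ' : HasDerivAt (fun x => (C - g x) / x)
      (((0 - r * ϖ r) * r - (C - g r) * 1) / r ^ 2) r :=
    HasDerivAt.div ((hasDerivAt_const r C).sub (hgd r hrm)) (hasDerivAt_id r) (ne_of_gt hr0)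
  have heq : deriv φ =ᶠ[nhds r] fun x => (C - g x) / x :=
    Filter.eventuallyEq_of_mem (isOpen_Ioo.mem_nhds hrm) hderiv
  have hd2φ : DifferentiableAt ℝ (deriv φ) r :=
    (hψ'.differentiableAt).congr_of_eventuallyEq heq
  refine ⟨hdφ, hd2φ, ?_⟩
  have e1 : deriv (deriv φ) r = ((0 - r * ϖ r) * r - (C - g r) * 1) / r ^ 2 := by
    rw [heq.deriv_eq]; exact hψ'.deriv
  have e2 : deriv φ r = (C - g r) / r := hderiv hrm
  rw [e1, e2]
  field_simp
  ring
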